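/- arXiv:2012.01238 — 6 statements merged into one kernel-verified Lean document; each statement's English description precedes it below -/
import Mathlib

section
/- Let α, β > 0 and δ ∈ ℝ. Then ∫₀^∞ (α/β)·[1+(1-δx)²]·(x/β)^{α-1}·exp(-(x/β)^α) dx = 2 + δ²β²Γ(1+2/α) - 2δβΓ(1+1/α). Consequently, the function f(x) = (α/(β Z))·[1+(1-δx)²]·(x/β)^{α-1}·exp(-(x/β)^α) with Z = 2 + δ²β²Γ(1+2/α) - 2δβΓ(1+1/α) is a probability density on [0,∞). -/
open Real MeasureTheory Set Filter

noncomputable def bwPdf (α β δ : ℝ) (x : ℝ) : ℝ :=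
  (α / (β * (2 + δ^2*β^2*Real.Gamma (1+2/α) - 2*δ*β*Real.Gamma (1+1/α)))) *
    (1+(1-δ*x)^2) * (x/β)^(α-1) * Real.exp (-(x/β)^α)

lemma weibull_core (α β δ : ℝ) (hα : 0 < α) (hβ : 0 < β) :
    (∫ x in Set.Ioi (0:ℝ),
        (α/β) * (1+(1-δ*x)^2) * (x/β)^(α-1) * Real.exp (-(x/β)^α))
      = 2 + δ^2*β^2*Real.Gamma (1+2/α) - 2*δ*β*Real.Gamma (1+1/α) := by
  set c := δ * β with hc
  have h1 : (∫ x in Set.Ioi (0:ℝ),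
        (α/β) * (1+(1-δ*x)^2) * (x/β)^(α-1) * Real.exp (-(x/β)^α))
      = ∫ x in Set.Ioi (0:ℝ),
        (α * x ^ (α-1)) • ((1+(1-c*(x^α)^(α⁻¹))^2) * Real.exp (-(x^α))) := by
    have key := integral_comp_mul_left_Ioi (fun y =>
        (α/β) * (1+(1-δ*y)^2) * (y/β)^(α-1) * Real.exp (-(y/β)^α)) 0 hβ
    simp only [mul_zero] at key
    rw [← smul_inv_smul₀ hβ.ne' (∫ x in Set.Ioi (0:ℝ),
        (α/β) * (1+(1-δ*x)^2) * (x/β)^(α-1) * Real.exp (-(x/β)^α)), ← key,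
      ← MeasureTheory.integral_smul]
    refine setIntegral_congr_fun measurableSet_Ioi (fun x hx => ?_)
    have hx0 : (0:ℝ) < x := hx
    have hbx : β * x / β = x := by field_simp
    have hxa : (x ^ α) ^ (α⁻¹) = x := by
      rw [← Real.rpow_mul hx0.le, mul_inv_cancel₀ hα.ne', Real.rpow_one]
    simp only [hbx, smul_eq_mul, hxa]
    field_simp
    ring
  rw [h1]
  have h2 := integral_comp_rpow_Ioi_of_pos (g := fun t =>
      (1+(1-c*t^(α⁻¹))^2) * Real.exp (-t)) hα
  rw [h2]
  have e1 : IntegrableOn (fun t : ℝ => Real.exp (-t) * t ^ ((1:ℝ) - 1)) (Set.Ioi 0) :=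
    Real.GammaIntegral_convergent one_pos
  have e2 : IntegrableOn (fun t : ℝ => Real.exp (-t) * t ^ ((1+1/α) - 1)) (Set.Ioi 0) :=
    Real.GammaIntegral_convergent (by positivity)
  have e3 : IntegrableOn (fun t : ℝ => Real.exp (-t) * t ^ ((1+2/α) - 1)) (Set.Ioi 0) :=
    Real.GammaIntegral_convergent (by positivity)
  have iA : Integrable (fun t : ℝ => 2 * (Real.exp (-t) * t ^ ((1:ℝ) - 1)))
      (volume.restrict (Set.Ioi 0)) := e1.const_mul 2
  have iB : Integrable (fun t : ℝ => (2*c) * (Real.exp (-t) * t ^ ((1+1/α) - 1)))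
      (volume.restrict (Set.Ioi 0)) := e2.const_mul (2*c)
  have iC : Integrable (fun t : ℝ => c^2 * (Real.exp (-t) * t ^ ((1+2/α) - 1)))
      (volume.restrict (Set.Ioi 0)) := e3.const_mul (c^2)
  have iAB : Integrable (fun t : ℝ => 2 * (Real.exp (-t) * t ^ ((1:ℝ) - 1))
      - (2*c) * (Real.exp (-t) * t ^ ((1+1/α) - 1))) (volume.restrict (Set.Ioi 0)) := iA.sub iB
  have h3 : (∫ t in Set.Ioi (0:ℝ), (1+(1-c*t^(α⁻¹))^2) * Real.exp (-t))
      = ∫ t in Set.Ioi (0:ℝ),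
          (2 * (Real.exp (-t) * t ^ ((1:ℝ) - 1))
            - (2*c) * (Real.exp (-t) * t ^ ((1+1/α) - 1))
            + c^2 * (Real.exp (-t) * t ^ ((1+2/α) - 1))) := by
    refine setIntegral_congr_fun measurableSet_Ioi (fun t ht => ?_)
    have ht0 : (0:ℝ) < t := ht
    have ha : (1:ℝ) + 1/α - 1 = α⁻¹ := by rw [add_sub_cancel_left, one_div]
    have hb : (1:ℝ) + 2/α - 1 = α⁻¹ * 2 := by rw [add_sub_cancel_left, div_eq_mul_inv, mul_comm]
    have hsq : t ^ (α⁻¹ * (2:ℝ)) = (t ^ (α⁻¹))^2 := by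
      rw [Real.rpow_mul ht0.le, Real.rpow_two]
    simp only [ha, hb, hsq, sub_self, Real.rpow_zero, mul_one]
    ring
  rw [h3, MeasureTheory.integral_add iAB iC, MeasureTheory.integral_sub iA iB,
    MeasureTheory.integral_const_mul, MeasureTheory.integral_const_mul,
    MeasureTheory.integral_const_mul,
    ← Real.Gamma_eq_integral one_pos, ← Real.Gamma_eq_integral (show (0:ℝ) < 1+1/α by positivity),
    ← Real.Gamma_eq_integral (show (0:ℝ) < 1+2/α by positivity), Real.Gamma_one]
  ring

lemma Z_pos (α β δ : ℝ) (hα : 0 < α) (hβ : 0 < β) :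
    0 < 2 + δ^2*β^2*Real.Gamma (1+2/α) - 2*δ*β*Real.Gamma (1+1/α) := by
  have hΓ1 : 0 < Real.Gamma (1+1/α) := Real.Gamma_pos_of_pos (by positivity)
  have hΓ2 : 0 < Real.Gamma (1+2/α) := Real.Gamma_pos_of_pos (by positivity)
  have key := Real.Gamma_mul_add_mul_le_rpow_Gamma_mul_rpow_Gamma one_pos
    (show (0:ℝ) < 1+2/α by positivity) one_half_pos one_half_pos (by norm_num)
  rw [show (1/2:ℝ)*1 + (1/2)*(1+2/α) = 1+1/α by ring, Real.Gamma_one,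
    Real.one_rpow, one_mul] at key
  have hsq : (Real.Gamma (1+2/α) ^ (1/2:ℝ))^2 = Real.Gamma (1+2/α) := by
    rw [← Real.rpow_two, ← Real.rpow_mul hΓ2.le]; norm_num
  have h2 : Real.Gamma (1+1/α) ^ 2 ≤ Real.Gamma (1+2/α) := by
    rw [← hsq]; exact pow_le_pow_left₀ hΓ1.le key 2
  nlinarith [sq_nonneg (1 - δ*β*Real.Gamma (1+1/α)), sq_nonneg (δ*β),
    mul_nonneg (mul_nonneg (sq_nonneg δ) (sq_nonneg β)) (sub_nonneg.mpr h2)]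

theorem stmt_0 (α β δ : ℝ) (hα : 0 < α) (hβ : 0 < β) :
    (∫ x in Set.Ioi (0:ℝ),
        (α/β) * (1+(1-δ*x)^2) * (x/β)^(α-1) * Real.exp (-(x/β)^α))
      = 2 + δ^2*β^2*Real.Gamma (1+2/α) - 2*δ*β*Real.Gamma (1+1/α) ∧
    (∀ x ∈ Set.Ici (0:ℝ), 0 ≤ bwPdf α β δ x) ∧
    (∫ x in Set.Ioi (0:ℝ), bwPdf α β δ x) = 1 := by
  have hZ := Z_pos α β δ hα hβ
  have hcore := weibull_core α β δ hα hβ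
  refine ⟨hcore, ?_, ?_⟩
  · intro x hx
    have hx0 : (0:ℝ) ≤ x := hx
    unfold bwPdf
    have h1 : 0 ≤ α / (β * (2 + δ^2*β^2*Real.Gamma (1+2/α) - 2*δ*β*Real.Gamma (1+1/α))) := by
      positivity
    have h2 : (0:ℝ) ≤ 1+(1-δ*x)^2 := by positivity
    have h3 : (0:ℝ) ≤ (x/β)^(α-1) := Real.rpow_nonneg (by positivity) _
    exact mul_nonneg (mul_nonneg (mul_nonneg h1 h2) h3) (Real.exp_nonneg _)
  · have hrw : ∀ x : ℝ, bwPdf α β δ x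
        = (2 + δ^2*β^2*Real.Gamma (1+2/α) - 2*δ*β*Real.Gamma (1+1/α))⁻¹ *
          ((α/β) * (1+(1-δ*x)^2) * (x/β)^(α-1) * Real.exp (-(x/β)^α)) := by
      intro x; unfold bwPdf; field_simp
    simp_rw [hrw]
    rw [MeasureTheory.integral_const_mul, hcore, inv_mul_cancel₀ hZ.ne']
end

section
/- Let X have the bimodal Weibull density f(x) = (α/(βZ))[1+(1-δx)²](x/β)^{α-1}exp(-(x/β)^α) on [0,∞), where Z = 2 + δ²β²Γ(1+2/α) - 2δβΓ(1+1/α). Then for every r > -α, E[X^r] = β^r · [2Γ(1+r/α) + δ²β²Γ(1+(r+2)/α) - 2δβΓ(1+(r+1)/α)] / [2 + δ²β²Γ(1+2/α) - 2δβΓ(1+1/α)]. -/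
open Real MeasureTheory Set Filter

lemma gamma_aux (s : ℝ) (hs : -1 < s) :
    (∫ y in Set.Ioi (0:ℝ), y ^ s * Real.exp (-y)) = Real.Gamma (s + 1) := by
  rw [Real.Gamma_eq_integral (by linarith : (0:ℝ) < s + 1)]
  refine setIntegral_congr_fun measurableSet_Ioi fun y _ => ?_
  rw [add_sub_cancel_right, mul_comm]

lemma integrable_aux (s : ℝ) (hs : -1 < s) :
    IntegrableOn (fun y => y ^ s * Real.exp (-y)) (Set.Ioi (0:ℝ)) := by
  have := Real.GammaIntegral_convergent (by linarith : (0:ℝ) < s + 1)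
  refine this.congr_fun (fun y _ => ?_) measurableSet_Ioi
  rw [add_sub_cancel_right, mul_comm]

theorem stmt_3 (α β δ : ℝ) (hα : 0 < α) (hβ : 0 < β) (r : ℝ) (hr : -α < r) :
    (∫ x in Set.Ioi (0:ℝ), x^r * bwPdf α β δ x)
      = β^r * (2*Real.Gamma (1+r/α) + δ^2*β^2*Real.Gamma (1+(r+2)/α)
          - 2*δ*β*Real.Gamma (1+(r+1)/α))
        / (2 + δ^2*β^2*Real.Gamma (1+2/α) - 2*δ*β*Real.Gamma (1+1/α)) := by
  set Z : ℝ := 2 + δ^2*β^2*Real.Gamma (1+2/α) - 2*δ*β*Real.Gamma (1+1/α) with hZ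
  by_cases hZ0 : Z = 0
  · simp only [bwPdf, ← hZ, hZ0, mul_zero, div_zero, zero_mul, integral_zero]
  -- exponents
  have ha : (-1:ℝ) < r/α := by rw [lt_div_iff₀ hα]; linarith
  have hb : (-1:ℝ) < (r+1)/α := by rw [lt_div_iff₀ hα]; nlinarith
  have hc : (-1:ℝ) < (r+2)/α := by rw [lt_div_iff₀ hα]; nlinarith
  set F : ℝ → ℝ := fun y =>
    2 * (y ^ (r/α) * Real.exp (-y)) + (-(2*δ*β)) * (y ^ ((r+1)/α) * Real.exp (-y))
      + δ^2*β^2 * (y ^ ((r+2)/α) * Real.exp (-y)) with hF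
  have hFint : (∫ y in Set.Ioi (0:ℝ), F y)
      = 2 * Real.Gamma (r/α + 1) + (-(2*δ*β)) * Real.Gamma ((r+1)/α + 1)
        + δ^2*β^2 * Real.Gamma ((r+2)/α + 1) := by
    have i1 : IntegrableOn (fun y => 2 * (y ^ (r/α) * Real.exp (-y))) (Set.Ioi (0:ℝ)) :=
      (integrable_aux _ ha).const_mul 2
    have i2 : IntegrableOn (fun y => (-(2*δ*β)) * (y ^ ((r+1)/α) * Real.exp (-y)))
        (Set.Ioi (0:ℝ)) := (integrable_aux _ hb).const_mul _
    have i3 : IntegrableOn (fun y => δ^2*β^2 * (y ^ ((r+2)/α) * Real.exp (-y)))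
        (Set.Ioi (0:ℝ)) := (integrable_aux _ hc).const_mul _
    have i12 : IntegrableOn (fun y => 2 * (y ^ (r/α) * Real.exp (-y))
        + (-(2*δ*β)) * (y ^ ((r+1)/α) * Real.exp (-y))) (Set.Ioi (0:ℝ)) := i1.add i2
    rw [hF, integral_add i12 i3, integral_add i1 i2,
      integral_const_mul, integral_const_mul, integral_const_mul,
      gamma_aux _ ha, gamma_aux _ hb, gamma_aux _ hc]
  -- substitution y = t^α
  have hsub1 : (∫ t in Set.Ioi (0:ℝ), (|α| * t ^ (α - 1)) • F (t ^ α))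
      = ∫ y in Set.Ioi (0:ℝ), F y := integral_comp_rpow_Ioi F hα.ne'
  -- substitution x = β * t
  have hsub2 : (∫ t in Set.Ioi (0:ℝ), (β*t)^r * bwPdf α β δ (β*t))
      = β⁻¹ • ∫ x in Set.Ioi (0:ℝ), x^r * bwPdf α β δ x := by
    have := integral_comp_mul_left_Ioi (fun x => x^r * bwPdf α β δ x) 0 hβ
    simpa using this
  -- pointwise identity on Ioi 0
  have hpt : ∀ t ∈ Set.Ioi (0:ℝ),
      (β*t)^r * bwPdf α β δ (β*t)
        = (β^r / (β*Z)) * ((|α| * t ^ (α - 1)) • F (t ^ α)) := by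
    intro t ht
    have ht0 : (0:ℝ) < t := ht
    have htr : (β*t)^r = β^r * t^r := Real.mul_rpow hβ.le ht0.le
    have hdiv : (β*t)/β = t := by field_simp
    have hmd : ∀ s : ℝ, α * (s / α) = s := fun s => by field_simp
    have hta : (t ^ α) ^ (r/α) = t ^ r := by
      rw [← Real.rpow_mul ht0.le, hmd]
    have htb : (t ^ α) ^ ((r+1)/α) = t ^ (r+1) := by
      rw [← Real.rpow_mul ht0.le, hmd]
    have htc : (t ^ α) ^ ((r+2)/α) = t ^ (r+2) := by
      rw [← Real.rpow_mul ht0.le, hmd]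
    have h1 : t ^ (r+1) = t ^ r * t := by
      rw [Real.rpow_add ht0, Real.rpow_one]
    have h2 : t ^ (r+2) = t ^ r * t^(2:ℕ) := by
      rw [Real.rpow_add ht0]
      congr 1
      rw [← Real.rpow_natCast t 2]
      norm_num
    have habs : |α| = α := abs_of_pos hα
    simp only [bwPdf, ← hZ, hdiv, htr, hF, smul_eq_mul, hta, htb, htc, h1, h2, habs]
    field_simp
    ring
  calc (∫ x in Set.Ioi (0:ℝ), x^r * bwPdf α β δ x)
      = β • ∫ t in Set.Ioi (0:ℝ), (β*t)^r * bwPdf α β δ (β*t) := by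
        rw [hsub2, smul_smul, mul_inv_cancel₀ hβ.ne', one_smul]
    _ = β • ∫ t in Set.Ioi (0:ℝ),
          (β^r / (β*Z)) * ((|α| * t ^ (α - 1)) • F (t ^ α)) := by
        rw [setIntegral_congr_fun measurableSet_Ioi hpt]
    _ = β * ((β^r / (β*Z)) * ∫ y in Set.Ioi (0:ℝ), F y) := by
        rw [integral_const_mul, hsub1, smul_eq_mul]
    _ = β^r * (2*Real.Gamma (1+r/α) + δ^2*β^2*Real.Gamma (1+(r+2)/α)
          - 2*δ*β*Real.Gamma (1+(r+1)/α)) / Z := by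
        rw [hFint]
        have e1 : r/α + 1 = 1 + r/α := by ring
        have e2 : (r+1)/α + 1 = 1 + (r+1)/α := by ring
        have e3 : (r+2)/α + 1 = 1 + (r+2)/α := by ring
        rw [e1, e2, e3]
        field_simp
        ring
end

section
/- Let X have the bimodal Weibull density f(x;θ) with parameters α, β > 0 and δ ∈ ℝ. Then the survival function R(t) = P(X ≥ t) satisfies R(t) = { [1+(1-δt)²]·exp(-(t/β)^α) - (2δβ/α)·[Γ(1/α,(t/β)^α) - δβ·Γ(2/α,(t/β)^α)] } / { 2 + δ²β²Γ(1+2/α) - 2δβΓ(1+1/α) } for all t ≥ 0. -/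
open Real MeasureTheory Set Filter
open Topology

/-- Upper incomplete gamma function. -/
noncomputable def uGamma (a x : ℝ) : ℝ := ∫ u in Set.Ioi x, u^(a-1) * Real.exp (-u)

section aux
variable {α β δ t : ℝ}


lemma phi_deriv (hα : 0 < α) (hβ : 0 < β) {x : ℝ} (hx : 0 < x) :
    HasDerivAt (fun x : ℝ => (x/β)^α) (α/β * (x/β)^(α-1)) x := by
  have h1 : HasDerivAt (fun x : ℝ => x/β) (1/β) x := by
    simpa using (hasDerivAt_id x).div_const β
  have h2 := (Real.hasDerivAt_rpow_const (x := x/β) (p := α)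
      (Or.inl (div_pos hx hβ).ne')).comp x h1
  exact h2.congr_deriv (by ring)

lemma phi_image (hα : 0 < α) (hβ : 0 < β) (ht : 0 ≤ t) :
    (fun x : ℝ => (x/β)^α) '' Ioi t = Ioi ((t/β)^α) := by
  ext y
  simp only [mem_image, mem_Ioi]
  constructor
  · rintro ⟨x, hx, rfl⟩
    exact Real.rpow_lt_rpow (div_nonneg ht hβ.le) (by gcongr) hα
  · intro hy
    have hs0 : 0 ≤ (t/β)^α := Real.rpow_nonneg (div_nonneg ht hβ.le) α
    have hy0 : 0 ≤ y := le_trans hs0 hy.le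
    refine ⟨β * y^α⁻¹, ?_, ?_⟩
    · have h1 : t/β < y^α⁻¹ := by
        have h2 := Real.rpow_lt_rpow hs0 hy (show 0 < 1/α by positivity)
        rwa [one_div, Real.rpow_rpow_inv (div_nonneg ht hβ.le) hα.ne'] at h2
      calc t = β * (t/β) := by field_simp
        _ < β * y^α⁻¹ := by gcongr
    · rw [mul_div_cancel_left₀ _ hβ.ne', Real.rpow_inv_rpow hy0 hα.ne']

lemma phi_inj (hα : 0 < α) (hβ : 0 < β) (ht : 0 ≤ t) :
    InjOn (fun x : ℝ => (x/β)^α) (Ioi t) := by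
  have h : StrictMonoOn (fun x : ℝ => (x/β)^α) (Ioi t) := fun x hx y hy hxy =>
    Real.rpow_lt_rpow (div_nonneg (le_trans ht (le_of_lt hx)) hβ.le) (by gcongr) hα
  exact h.injOn

lemma point_eq (hα : 0 < α) (hβ : 0 < β) (r : ℝ) {x : ℝ} (hx : 0 < x) :
    |α/β * (x/β)^(α-1)| * (((x/β)^α)^((r+1)/α - 1) * Real.exp (-(x/β)^α))
      = α/β * (x/β)^r * Real.exp (-(x/β)^α) := by
  have hw : 0 < x/β := div_pos hx hβ
  have e1 : ((x/β)^α)^((r+1)/α - 1) = (x/β)^(r+1-α) := by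
    rw [← Real.rpow_mul hw.le]
    congr 1
    field_simp
  have habs : |α/β * (x/β)^(α-1)| = α/β * (x/β)^(α-1) := by
    rw [abs_of_nonneg]
    positivity
  rw [habs, e1]
  have e2 : (x/β)^(α-1) * (x/β)^(r+1-α) = (x/β)^r := by
    rw [← Real.rpow_add hw]
    congr 1; ring
  calc α/β * (x/β)^(α-1) * ((x/β)^(r+1-α) * Real.exp (-(x/β)^α))
      = α/β * ((x/β)^(α-1) * (x/β)^(r+1-α)) * Real.exp (-(x/β)^α) := by ring
    _ = _ := by rw [e2]


lemma master_eq (hα : 0 < α) (hβ : 0 < β) (ht : 0 ≤ t) (r : ℝ) :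
    ∫ x in Ioi t, α/β * (x/β)^r * Real.exp (-(x/β)^α)
      = uGamma ((r+1)/α) ((t/β)^α) := by
  rw [uGamma, ← phi_image hα hβ ht,
    integral_image_eq_integral_abs_deriv_smul measurableSet_Ioi
      (f' := fun x => α/β * (x/β)^(α-1))
      (fun x hx => (phi_deriv hα hβ (lt_of_le_of_lt ht hx)).hasDerivWithinAt)
      (phi_inj hα hβ ht)]
  refine (setIntegral_congr_fun measurableSet_Ioi fun x hx => ?_).symm
  simpa [smul_eq_mul] using point_eq hα hβ r (lt_of_le_of_lt ht hx)

lemma master_int (hα : 0 < α) (hβ : 0 < β) (ht : 0 ≤ t) (r : ℝ) (hr : -1 < r) :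
    IntegrableOn (fun x : ℝ => α/β * (x/β)^r * Real.exp (-(x/β)^α)) (Ioi t) := by
  have hG : IntegrableOn (fun u : ℝ => u^((r+1)/α - 1) * Real.exp (-u))
      ((fun x : ℝ => (x/β)^α) '' Ioi t) := by
    rw [phi_image hα hβ ht]
    have hconv := Real.GammaIntegral_convergent (show 0 < (r+1)/α from
      div_pos (by linarith) hα)
    have h2 : IntegrableOn (fun u : ℝ => u^((r+1)/α - 1) * Real.exp (-u)) (Ioi 0) := by
      simpa [mul_comm] using hconv
    exact h2.mono_set (Ioi_subset_Ioi (Real.rpow_nonneg (div_nonneg ht hβ.le) α))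
  have key := (integrableOn_image_iff_integrableOn_abs_deriv_smul measurableSet_Ioi
      (f' := fun x => α/β * (x/β)^(α-1))
      (fun x hx => (phi_deriv hα hβ (lt_of_le_of_lt ht hx)).hasDerivWithinAt)
      (phi_inj hα hβ ht) (fun u : ℝ => u^((r+1)/α - 1) * Real.exp (-u))).mp hG
  refine key.congr_fun (fun x hx => ?_) measurableSet_Ioi
  simpa [smul_eq_mul] using point_eq hα hβ r (lt_of_le_of_lt ht hx)


lemma F_deriv (hα : 0 < α) (hβ : 0 < β) {x : ℝ} (hx : 0 < x) :
    HasDerivAt (fun x : ℝ => -(1+(1-δ*x)^2) * Real.exp (-(x/β)^α))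
      (2*δ*(1-δ*x)*Real.exp (-(x/β)^α)
        + α/β*(1+(1-δ*x)^2)*(x/β)^(α-1)*Real.exp (-(x/β)^α)) x := by
  have hu : HasDerivAt (fun y : ℝ => -(1+(1-δ*y)^2)) (2*δ*(1-δ*x)) x := by
    have h := ((((hasDerivAt_id x).const_mul δ).const_sub 1).pow 2).const_add (1:ℝ) |>.neg
    simp only [id_eq] at h
    exact h.congr_deriv (by push_cast; ring)
  have hv : HasDerivAt (fun y : ℝ => Real.exp (-(y/β)^α))
      (Real.exp (-(x/β)^α) * (-(α/β * (x/β)^(α-1)))) x :=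
    ((phi_deriv hα hβ hx).neg).exp
  have h := hu.mul hv
  exact h.congr_deriv (by ring)

lemma F_tendsto (hα : 0 < α) (hβ : 0 < β) :
    Tendsto (fun x : ℝ => -(1+(1-δ*x)^2) * Real.exp (-(x/β)^α)) atTop (𝓝 0) := by
  have hφ : Tendsto (fun x : ℝ => (x/β)^α) atTop atTop :=
    (tendsto_rpow_atTop hα).comp (tendsto_id.atTop_div_const hβ)
  have T0 : Tendsto (fun y : ℝ => Real.exp (-y)) atTop (𝓝 0) :=
    Real.tendsto_exp_neg_atTop_nhds_zero
  have T1 : Tendsto (fun y : ℝ => y^(1/α) * Real.exp (-y)) atTop (𝓝 0) := by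
    have h := tendsto_rpow_mul_exp_neg_mul_atTop_nhds_zero (1/α) 1 one_pos
    simpa using h
  have T2 : Tendsto (fun y : ℝ => (y^(1/α))^2 * Real.exp (-y)) atTop (𝓝 0) := by
    have h := tendsto_rpow_mul_exp_neg_mul_atTop_nhds_zero (2/α) 1 one_pos
    simp only [neg_one_mul] at h
    refine h.congr' ?_
    filter_upwards [eventually_ge_atTop (0:ℝ)] with y hy
    rw [← Real.rpow_natCast (y^(1/α)) 2, ← Real.rpow_mul hy]
    norm_num
    ring_nf
  have TG : Tendsto (fun y : ℝ => -(1+(1-δ*(β*y^(1/α)))^2) * Real.exp (-y)) atTop (𝓝 0) := by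
    have h := (((T0.const_mul 2).sub (T1.const_mul (2*δ*β))).add
      (T2.const_mul (δ^2*β^2))).neg
    norm_num at h
    refine h.congr fun y => ?_
    ring
  refine (TG.comp hφ).congr' ?_
  filter_upwards [eventually_gt_atTop (0:ℝ)] with x hx
  have : β * ((x/β)^α)^(1/α) = x := by
    rw [one_div, Real.rpow_rpow_inv (div_nonneg hx.le hβ.le) hα.ne',
      mul_div_cancel₀ _ hβ.ne']
  simp only [Function.comp, this]

lemma low_int (hα : 0 < α) (hβ : 0 < β) (ht : 0 ≤ t) :
    IntegrableOn (fun x : ℝ => 2*δ*(1-δ*x)*Real.exp (-(x/β)^α)) (Ioi t) := by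
  have h0 := master_int hα hβ ht 0 (by norm_num)
  have h1 := master_int hα hβ ht 1 (by norm_num)
  have h := ((h0.const_mul (2*δ*β/α)).sub (h1.const_mul (2*δ^2*β^2/α)))
  refine IntegrableOn.congr_fun h (fun x hx => ?_) measurableSet_Ioi
  simp only [Pi.sub_apply, Pi.add_apply]
  rw [Real.rpow_zero, Real.rpow_one]
  field_simp

lemma fprime_int (hα : 0 < α) (hβ : 0 < β) (ht : 0 ≤ t) :
    IntegrableOn (fun x : ℝ => 2*δ*(1-δ*x)*Real.exp (-(x/β)^α)
      + α/β*(1+(1-δ*x)^2)*(x/β)^(α-1)*Real.exp (-(x/β)^α)) (Ioi t) := by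
  have hm1 := master_int hα hβ ht (α-1) (by linarith)
  have hm2 := master_int hα hβ ht α (by linarith)
  have hm3 := master_int hα hβ ht (α+1) (by linarith)
  have hG : IntegrableOn
      (fun x : ℝ => α/β*(1+(1-δ*x)^2)*(x/β)^(α-1)*Real.exp (-(x/β)^α)) (Ioi t) := by
    have h := ((hm1.const_mul 2).sub (hm2.const_mul (2*δ*β))).add (hm3.const_mul (δ^2*β^2))
    refine IntegrableOn.congr_fun h (fun x hx => ?_) measurableSet_Ioi
    simp only [Pi.sub_apply, Pi.add_apply]
    have hx0 : 0 < x := lt_of_le_of_lt ht hx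
    have hw : (0:ℝ) < x/β := div_pos hx0 hβ
    have k1 : (x/β)^α = (x/β) * (x/β)^(α-1) := by
      have h1 := Real.rpow_add hw 1 (α-1)
      rw [Real.rpow_one] at h1
      rw [← h1]
      congr 1
      ring
    have k2 : (x/β)^(α+1) = (x/β) * (x/β)^α := by
      have h1 := Real.rpow_add hw 1 α
      rw [Real.rpow_one] at h1
      rw [← h1]
      congr 1
      ring
    set E := Real.exp (-(x/β)^α) with hE
    rw [k2, k1]
    field_simp
    ring
  exact (low_int hα hβ ht).add hG

lemma Gint (hα : 0 < α) (hβ : 0 < β) (ht : 0 ≤ t) :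
    ∫ x in Ioi t, α/β*(1+(1-δ*x)^2)*(x/β)^(α-1)*Real.exp (-(x/β)^α)
      = (1+(1-δ*t)^2) * Real.exp (-(t/β)^α)
        - (2*δ*β/α) * (uGamma (1/α) ((t/β)^α) - δ*β * uGamma (2/α) ((t/β)^α)) := by
  have hφc : Continuous fun x : ℝ => (x/β)^α := by
    have h : Continuous fun y : ℝ => y^α :=
      continuous_iff_continuousAt.mpr fun y => Real.continuousAt_rpow_const y α (Or.inr hα.le)
    exact h.comp (continuous_id.div_const β)
  have hFc : Continuous fun x : ℝ => -(1+(1-δ*x)^2) * Real.exp (-(x/β)^α) := by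
    exact ((continuous_const.add ((continuous_const.sub
      (continuous_const.mul continuous_id)).pow 2)).neg).mul
      (Real.continuous_exp.comp hφc.neg)
  have hFTC := integral_Ioi_of_hasDerivAt_of_tendsto (a := t)
    (f' := fun x : ℝ => 2*δ*(1-δ*x)*Real.exp (-(x/β)^α)
      + α/β*(1+(1-δ*x)^2)*(x/β)^(α-1)*Real.exp (-(x/β)^α))
    hFc.continuousWithinAt
    (fun x hx => F_deriv hα hβ (lt_of_le_of_lt ht hx))
    (fprime_int hα hβ ht) (F_tendsto hα hβ)
  have e0 := master_eq hα hβ ht 0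
  have e1 := master_eq hα hβ ht 1
  rw [show ((0:ℝ)+1)/α = 1/α by norm_num] at e0
  rw [show ((1:ℝ)+1)/α = 2/α by norm_num] at e1
  have hint0 := master_int hα hβ ht 0 (by norm_num)
  have hint1 := master_int hα hβ ht 1 (by norm_num)
  have hlow_eq : ∫ x in Ioi t, 2*δ*(1-δ*x)*Real.exp (-(x/β)^α)
      = (2*δ*β/α) * uGamma (1/α) ((t/β)^α) - (2*δ^2*β^2/α) * uGamma (2/α) ((t/β)^α) := by
    calc ∫ x in Ioi t, 2*δ*(1-δ*x)*Real.exp (-(x/β)^α)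
        = ∫ x in Ioi t, ((2*δ*β/α) * (α/β*(x/β)^(0:ℝ)*Real.exp (-(x/β)^α))
            - (2*δ^2*β^2/α) * (α/β*(x/β)^(1:ℝ)*Real.exp (-(x/β)^α))) := by
          refine setIntegral_congr_fun measurableSet_Ioi fun x hx => ?_
          rw [Real.rpow_zero, Real.rpow_one]
          field_simp
      _ = (2*δ*β/α) * (∫ x in Ioi t, α/β*(x/β)^(0:ℝ)*Real.exp (-(x/β)^α))
            - (2*δ^2*β^2/α) * ∫ x in Ioi t, α/β*(x/β)^(1:ℝ)*Real.exp (-(x/β)^α) := by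
          rw [integral_sub (hint0.const_mul _) (hint1.const_mul _),
            integral_const_mul, integral_const_mul]
      _ = _ := by rw [e0, e1]
  have hsplit : ∫ x in Ioi t, α/β*(1+(1-δ*x)^2)*(x/β)^(α-1)*Real.exp (-(x/β)^α)
      = (∫ x in Ioi t, (2*δ*(1-δ*x)*Real.exp (-(x/β)^α)
          + α/β*(1+(1-δ*x)^2)*(x/β)^(α-1)*Real.exp (-(x/β)^α)))
        - ∫ x in Ioi t, 2*δ*(1-δ*x)*Real.exp (-(x/β)^α) := by
    rw [← integral_sub (fprime_int hα hβ ht) (low_int hα hβ ht)]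
    refine setIntegral_congr_fun measurableSet_Ioi fun x hx => ?_
    ring
  rw [hsplit, hFTC, hlow_eq]
  ring

end aux

theorem stmt_8 (α β δ : ℝ) (hα : 0 < α) (hβ : 0 < β) (t : ℝ) (ht : 0 ≤ t) :
    (∫ x in Set.Ioi t, bwPdf α β δ x)
      = ((1+(1-δ*t)^2) * Real.exp (-(t/β)^α)
          - (2*δ*β/α) * (uGamma (1/α) ((t/β)^α) - δ*β * uGamma (2/α) ((t/β)^α)))
        / (2 + δ^2*β^2*Real.Gamma (1+2/α) - 2*δ*β*Real.Gamma (1+1/α)) := by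
  have h1 : (∫ x in Set.Ioi t, bwPdf α β δ x)
      = (2 + δ^2*β^2*Real.Gamma (1+2/α) - 2*δ*β*Real.Gamma (1+1/α))⁻¹
        * ∫ x in Set.Ioi t, α/β*(1+(1-δ*x)^2)*(x/β)^(α-1)*Real.exp (-(x/β)^α) := by
    rw [← integral_const_mul]
    refine setIntegral_congr_fun measurableSet_Ioi fun x _ => ?_
    simp only [bwPdf, div_eq_mul_inv, mul_inv]
    ring
  rw [h1, Gint hα hβ ht, inv_mul_eq_div]
end

section
/- Let X have the bimodal Weibull density with α > 1. Then the moment generating function E[exp(tX)] is finite for every t ∈ ℝ and equals Σ_{n=0}^∞ (βt)^n/n! · [2Γ(1+n/α) + δ²β²Γ(1+(n+2)/α) - 2δβΓ(1+(n+1)/α)] / [2 + δ²β²Γ(1+2/α) - 2δβΓ(1+1/α)]. -/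
open Real MeasureTheory Set Filter

noncomputable def bwW (α β : ℝ) (x : ℝ) : ℝ := (x/β)^(α-1) * Real.exp (-(x/β)^α)
noncomputable def bwG (α β δ : ℝ) (x : ℝ) : ℝ := (1+(1-δ*x)^2) * bwW α β x

lemma L1exp {c b p : ℝ} (hb : 0 < b) (hp : 1 < p) :
    (fun x : ℝ => exp (c * x - b * x ^ p)) =o[atTop] fun x : ℝ => exp (-x) := by
  rw [isLittleO_exp_comp_exp_comp]
  suffices Tendsto (fun x => x * (b * x ^ (p - 1) - (c + 1))) atTop atTop by
    refine Tendsto.congr' ?_ this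
    refine eventuallyEq_of_mem (Ioi_mem_atTop (0 : ℝ)) (fun x hx => ?_)
    rw [mem_Ioi] at hx
    rw [rpow_sub_one hx.ne']
    field_simp [hx.ne']
    ring
  apply Tendsto.atTop_mul_atTop₀ tendsto_id
  refine tendsto_atTop_add_const_right atTop (-(c + 1) : ℝ) ?_
  exact Tendsto.const_mul_atTop hb (tendsto_rpow_atTop (by linarith))

lemma L1 {c b q p : ℝ} (hb : 0 < b) (hq : -1 < q) (hp : 1 < p) :
    IntegrableOn (fun x : ℝ => x ^ q * exp (c * x - b * x ^ p)) (Ioi 0) := by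
  have h_exp : Continuous (fun x : ℝ => exp (c * x - b * x ^ p)) := by
    apply Real.continuous_exp.comp
    exact (continuous_const.mul continuous_id).sub
      (continuous_const.mul (continuous_rpow_const (by linarith)))
  rw [← Ioc_union_Ioi_eq_Ioi zero_le_one, integrableOn_union]
  constructor
  · rw [← integrableOn_Icc_iff_integrableOn_Ioc]
    refine IntegrableOn.mul_continuousOn ?_ h_exp.continuousOn isCompact_Icc
    refine (intervalIntegrable_iff_integrableOn_Icc_of_le zero_le_one).mp ?_
    exact intervalIntegral.intervalIntegrable_rpow' hq
  · have h_rpow : ContinuousOn (fun x : ℝ => x ^ q) (Ici 1) := by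
      intro x hx
      exact continuousWithinAt_id.rpow_const (Or.inl (ne_of_gt (lt_of_lt_of_le zero_lt_one hx)))
    refine integrable_of_isBigO_exp_neg (by norm_num : (0 : ℝ) < 1 / 2)
      (h_rpow.mul h_exp.continuousOn) (Asymptotics.IsLittleO.isBigO ?_)
    have h1 := (Asymptotics.isBigO_refl (fun x : ℝ => x ^ q) atTop).mul_isLittleO (L1exp hb hp (c := c))
    refine h1.trans ?_
    simpa only [mul_comm] using Real.Gamma_integrand_isLittleO q

lemma eqW {α β : ℝ} (hα : 1 < α) (hβ : 0 < β) (c s : ℝ) :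
    ∀ x ∈ Ioi (0:ℝ), β ^ (1-α) * (x ^ (s+α-1) * exp (c*x - β^(-α) * x ^ α))
      = exp (c*x) * x ^ s * ((x/β)^(α-1) * exp (-(x/β)^α)) := by
  intro x hx
  have hx' : (0:ℝ) < x := hx
  rw [Real.div_rpow hx'.le hβ.le, Real.div_rpow hx'.le hβ.le,
    show s+α-1 = s + (α-1) by ring, Real.rpow_add hx',
    show (1-α) = -(α-1) by ring, Real.rpow_neg hβ.le,
    Real.rpow_neg hβ.le, sub_eq_add_neg (c*x), Real.exp_add]
  rw [div_eq_mul_inv, div_eq_mul_inv]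
  ring_nf

lemma intW {α β : ℝ} (hα : 1 < α) (hβ : 0 < β) (c s : ℝ) (hs : 0 ≤ s) :
    IntegrableOn (fun x => exp (c*x) * x ^ s * ((x/β)^(α-1) * exp (-(x/β)^α))) (Ioi 0) := by
  have hb : (0:ℝ) < β ^ (-α) := rpow_pos_of_pos hβ _
  have h : IntegrableOn (fun x => β ^ (1-α) * (x ^ (s+α-1) * exp (c*x - β^(-α) * x ^ α))) (Ioi 0) :=
    (L1 (c := c) hb (q := s + α - 1) (by linarith) hα).const_mul (β ^ (1-α))
  exact IntegrableOn.congr_fun h (fun x hx => eqW hα hβ c s x hx) measurableSet_Ioi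

lemma valW {α β : ℝ} (hα : 1 < α) (hβ : 0 < β) (s : ℝ) (hs : 0 ≤ s) :
    ∫ x in Ioi (0:ℝ), x ^ s * ((x/β)^(α-1) * exp (-(x/β)^α))
      = β ^ (s+1) * ((1/α) * Real.Gamma ((s+α)/α)) := by
  have hb : (0:ℝ) < β ^ (-α) := rpow_pos_of_pos hβ _
  have h0 : ∫ x in Ioi (0:ℝ), x ^ s * ((x/β)^(α-1) * exp (-(x/β)^α))
      = ∫ x in Ioi (0:ℝ), β ^ (1-α) * (x ^ (s+α-1) * exp (- β^(-α) * x ^ α)) := by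
    refine setIntegral_congr_fun measurableSet_Ioi (fun x hx => ?_)
    rw [show -β^(-α) * x ^ α = 0*x - β^(-α) * x ^ α by ring, eqW hα hβ 0 s x hx]
    simp
  rw [h0, integral_const_mul,
    integral_rpow_mul_exp_neg_mul_rpow (by linarith : (0:ℝ) < α) (by linarith : (-1:ℝ) < s+α-1) hb,
    show s+α-1+1 = s+α by ring, ← Real.rpow_mul hβ.le,
    show -α * (-(s+α)/α) = s+α by field_simp,
    ← mul_assoc, ← mul_assoc, ← Real.rpow_add hβ, show 1-α+(s+α) = s+1 by ring, mul_assoc]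

-- natural power versions
lemma intWn {α β : ℝ} (hα : 1 < α) (hβ : 0 < β) (c : ℝ) (m : ℕ) :
    IntegrableOn (fun x => exp (c*x) * x ^ m * bwW α β x) (Ioi 0) := by
  refine IntegrableOn.congr_fun (intW hα hβ c (m:ℝ) (Nat.cast_nonneg m))
    (fun x hx => ?_) measurableSet_Ioi
  rw [Real.rpow_natCast]; rfl

lemma valWn {α β : ℝ} (hα : 1 < α) (hβ : 0 < β) (m : ℕ) :
    ∫ x in Ioi (0:ℝ), x ^ m * bwW α β x
      = β ^ (m+1) * ((1/α) * Real.Gamma (1+(m:ℝ)/α)) := by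
  have h1 : ∫ x in Ioi (0:ℝ), x ^ m * bwW α β x
      = ∫ x in Ioi (0:ℝ), x ^ ((m:ℝ)) * ((x/β)^(α-1) * exp (-(x/β)^α)) := by
    refine setIntegral_congr_fun measurableSet_Ioi (fun x hx => ?_)
    rw [Real.rpow_natCast]; rfl
  rw [h1, valW hα hβ (m:ℝ) (Nat.cast_nonneg m),
    show ((m:ℝ)+α)/α = 1+(m:ℝ)/α by field_simp; ring,
    show (m:ℝ)+1 = ((m+1 : ℕ):ℝ) by push_cast; ring, Real.rpow_natCast]

lemma intXG {α β δ : ℝ} (hα : 1 < α) (hβ : 0 < β) (c : ℝ) (n : ℕ) :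
    IntegrableOn (fun x => exp (c*x) * (x ^ n * bwG α β δ x)) (Ioi 0) := by
  have h := (((intWn hα hβ c n).const_mul 2).add
      ((intWn hα hβ c (n+2)).const_mul (δ^2))).sub
      ((intWn hα hβ c (n+1)).const_mul (2*δ))
  exact h.congr (Filter.Eventually.of_forall fun x => by
    simp only [Pi.add_apply, Pi.sub_apply, bwG]; ring)

lemma intWn0 {α β : ℝ} (hα : 1 < α) (hβ : 0 < β) (m : ℕ) :
    IntegrableOn (fun x => x ^ m * bwW α β x) (Ioi 0) := by
  have h := intWn hα hβ 0 m
  simpa using h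

lemma intXG0 {α β δ : ℝ} (hα : 1 < α) (hβ : 0 < β) (n : ℕ) :
    IntegrableOn (fun x => x ^ n * bwG α β δ x) (Ioi 0) := by
  have h := intXG (δ := δ) hα hβ 0 n
  simpa using h

lemma valXG {α β δ : ℝ} (hα : 1 < α) (hβ : 0 < β) (n : ℕ) :
    ∫ x in Ioi (0:ℝ), x ^ n * bwG α β δ x
      = β ^ (n+1) * (1/α) * (2*Real.Gamma (1+(n:ℝ)/α) + δ^2*β^2*Real.Gamma (1+((n:ℝ)+2)/α)
          - 2*δ*β*Real.Gamma (1+((n:ℝ)+1)/α)) := by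
  have h1 : (fun x : ℝ => x ^ n * bwG α β δ x)
      = fun x => (2 * (x^n * bwW α β x) + δ^2 * (x^(n+2) * bwW α β x))
          - 2*δ * (x^(n+1) * bwW α β x) := by
    funext x; simp only [bwG]; ring
  have h2 : Integrable (fun x : ℝ => 2 * (x^n * bwW α β x)) (volume.restrict (Ioi 0)) :=
    (intWn0 hα hβ n).const_mul 2
  have h3 : Integrable (fun x : ℝ => δ^2 * (x^(n+2) * bwW α β x)) (volume.restrict (Ioi 0)) :=
    (intWn0 hα hβ (n+2)).const_mul (δ^2)
  have h4 : Integrable (fun x : ℝ => 2*δ * (x^(n+1) * bwW α β x)) (volume.restrict (Ioi 0)) :=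
    (intWn0 hα hβ (n+1)).const_mul (2*δ)
  have h5 : Integrable (fun x : ℝ => 2 * (x^n * bwW α β x) + δ^2 * (x^(n+2) * bwW α β x))
      (volume.restrict (Ioi 0)) := h2.add h3
  rw [h1, integral_sub h5 h4, integral_add h2 h3,
    integral_const_mul, integral_const_mul, integral_const_mul,
    valWn hα hβ n, valWn hα hβ (n+1), valWn hα hβ (n+2)]
  push_cast
  ring

theorem stmt_11 (α β δ : ℝ) (hα : 1 < α) (hβ : 0 < β) (t : ℝ) :
    MeasureTheory.IntegrableOn (fun x => Real.exp (t*x) * bwPdf α β δ x) (Set.Ioi 0) ∧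
    (∫ x in Set.Ioi (0:ℝ), Real.exp (t*x) * bwPdf α β δ x)
      = ∑' n : ℕ, (β*t)^n / (n.factorial : ℝ) *
          (2*Real.Gamma (1+(n:ℝ)/α) + δ^2*β^2*Real.Gamma (1+((n:ℝ)+2)/α)
            - 2*δ*β*Real.Gamma (1+((n:ℝ)+1)/α))
          / (2 + δ^2*β^2*Real.Gamma (1+2/α) - 2*δ*β*Real.Gamma (1+1/α)) := by
  have hα0 : (0:ℝ) < α := by linarith
  set Z : ℝ := 2 + δ^2*β^2*Real.Gamma (1+2/α) - 2*δ*β*Real.Gamma (1+1/α) with hZ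
  set C : ℝ := α / (β * Z) with hC
  -- the pdf rewritten
  have hpdf : ∀ x, Real.exp (t*x) * bwPdf α β δ x = C * (Real.exp (t*x) * bwG α β δ x) := by
    intro x; simp only [bwPdf, bwG, bwW, hC, hZ]; ring
  -- integrability of exp(c x) * G
  have intG : ∀ c : ℝ, IntegrableOn (fun x => Real.exp (c*x) * bwG α β δ x) (Ioi 0) := by
    intro c
    have h := intXG (δ := δ) hα hβ c 0
    exact h.congr (Filter.Eventually.of_forall fun x => by simp)
  -- part 1
  have part1 : IntegrableOn (fun x => Real.exp (t*x) * bwPdf α β δ x) (Ioi 0) := by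
    have h := (intG t).const_mul C
    exact h.congr (Filter.Eventually.of_forall fun x => (hpdf x).symm)
  refine ⟨part1, ?_⟩
  -- the series terms
  set F : ℕ → ℝ → ℝ := fun n x => (t*x)^n / (n.factorial : ℝ) * bwG α β δ x with hF
  have intF : ∀ n, Integrable (F n) (volume.restrict (Ioi 0)) := by
    intro n
    have h := (intXG0 (δ := δ) hα hβ n).const_mul (t^n / (n.factorial:ℝ))
    exact h.congr (Filter.Eventually.of_forall fun x => by simp only [hF, mul_pow]; ring)
  have hGpos : ∀ x ∈ Ioi (0:ℝ), 0 ≤ bwG α β δ x := by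
    intro x hx
    have hx' : (0:ℝ) < x := hx
    have h1 : 0 < (x/β)^(α-1) := rpow_pos_of_pos (div_pos hx' hβ) _
    have h2 : 0 ≤ bwW α β x := le_of_lt (mul_pos h1 (exp_pos _))
    have h3 : (0:ℝ) ≤ 1+(1-δ*x)^2 := by positivity
    exact mul_nonneg h3 h2
  -- summability of the integrals of norms
  have sumS : Summable (fun n => ∫ x in Ioi (0:ℝ), ‖F n x‖) := by
    refine summable_of_sum_range_le (c := ∫ x in Ioi (0:ℝ), Real.exp (|t| * x) * bwG α β δ x)
      (fun n => integral_nonneg (fun x => norm_nonneg _)) (fun N => ?_)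
    rw [← integral_finset_sum _ (fun i _ => (intF i).norm)]
    refine integral_mono_ae (integrable_finset_sum _ (fun i _ => (intF i).norm)) (intG |t|) ?_
    rw [EventuallyLE, ae_restrict_iff' measurableSet_Ioi]
    refine Filter.Eventually.of_forall (fun x hx => ?_)
    have hx' : (0:ℝ) < x := hx
    have hGx := hGpos x hx
    have h1 : ∀ i : ℕ, ‖F i x‖ = |t*x|^i/(i.factorial:ℝ) * bwG α β δ x := by
      intro i
      simp only [hF, Real.norm_eq_abs, abs_mul, abs_div, abs_pow, abs_of_nonneg hGx,
        Nat.abs_cast]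
    simp only [h1]
    rw [← Finset.sum_mul]
    have h2 : ∑ i ∈ Finset.range N, |t*x|^i/(i.factorial:ℝ) ≤ Real.exp |t*x| :=
      Real.sum_le_exp_of_nonneg (abs_nonneg _) N
    have h3 : |t*x| = |t| * x := by rw [abs_mul, abs_of_pos hx']
    calc (∑ i ∈ Finset.range N, |t*x|^i/(i.factorial:ℝ)) * bwG α β δ x
        ≤ Real.exp |t*x| * bwG α β δ x := mul_le_mul_of_nonneg_right h2 hGx
      _ = Real.exp (|t| * x) * bwG α β δ x := by rw [h3]
  -- pointwise series identity
  have hsum_pt : (fun x => Real.exp (t*x) * bwG α β δ x) = fun x => ∑' n, F n x := by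
    funext x
    rw [hF]
    rw [tsum_mul_right]
    congr 1
    rw [Real.exp_eq_exp_ℝ, NormedSpace.exp_eq_tsum_div]
  -- swap integral and sum
  have key : ∫ x in Ioi (0:ℝ), Real.exp (t*x) * bwG α β δ x
      = ∑' n, ∫ x in Ioi (0:ℝ), F n x := by
    rw [hsum_pt, ← MeasureTheory.integral_tsum_of_summable_integral_norm intF sumS]
  -- compute each term
  have valF : ∀ n : ℕ, ∫ x in Ioi (0:ℝ), F n x
      = t^n/(n.factorial:ℝ) * (β ^ (n+1) * (1/α) * (2*Real.Gamma (1+(n:ℝ)/α)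
          + δ^2*β^2*Real.Gamma (1+((n:ℝ)+2)/α) - 2*δ*β*Real.Gamma (1+((n:ℝ)+1)/α))) := by
    intro n
    have h1 : (fun x => F n x) = fun x => t^n/(n.factorial:ℝ) * (x^n * bwG α β δ x) := by
      funext x; simp only [hF, mul_pow]; ring
    rw [h1, integral_const_mul, valXG hα hβ n]
  calc ∫ x in Ioi (0:ℝ), Real.exp (t*x) * bwPdf α β δ x
      = ∫ x in Ioi (0:ℝ), C * (Real.exp (t*x) * bwG α β δ x) := by
        exact setIntegral_congr_fun measurableSet_Ioi (fun x _ => hpdf x)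
    _ = C * ∫ x in Ioi (0:ℝ), Real.exp (t*x) * bwG α β δ x := integral_const_mul _ _
    _ = ∑' n : ℕ, C * ∫ x in Ioi (0:ℝ), F n x := by rw [key, tsum_mul_left]
    _ = _ := by
        refine tsum_congr (fun n => ?_)
        rw [valF n, hC]
        have hfac : ((n.factorial:ℝ)) ≠ 0 := Nat.cast_ne_zero.mpr n.factorial_ne_zero
        rcases eq_or_ne Z 0 with h | h
        · simp [h]
        · field_simp
          ring
end

section
/- Let H(t) = f(t)/R(t) be the hazard rate of the bimodal Weibull distribution, where f is its density and R its survival function. Then lim_{t→0⁺} H(t) = 0 if α > 1, equals 1/(β(1 - δβ + δ²β²)) if α = 1, and equals +∞ if α < 1. -/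
open Real MeasureTheory Set Filter

lemma int_aux {p q b : ℝ} (hp : 0 < p) (hq : -1 < q) (hb : 0 < b) :
    IntegrableOn (fun x : ℝ => x ^ q * Real.exp (-b * x ^ p)) (Set.Ioi 0) := by
  set s : ℝ := (q + 1) / p with hs_def
  have hs : 0 < s := div_pos (by linarith) hp
  have h0 : IntegrableOn (fun y : ℝ => Real.exp (-y) * y ^ (s - 1)) (Set.Ioi 0) :=
    Real.GammaIntegral_convergent hs
  have h1 : IntegrableOn (fun y : ℝ => Real.exp (-(b * y)) * (b * y) ^ (s - 1))
      (Set.Ioi 0) := by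
    have := (integrableOn_Ioi_comp_mul_left_iff
      (fun y => Real.exp (-y) * y ^ (s - 1)) 0 hb).mpr (by simpa using h0)
    simpa using this
  have h2 : IntegrableOn (fun y : ℝ => y ^ (s - 1) * Real.exp (-(b * y))) (Set.Ioi 0) := by
    have h3 : IntegrableOn
        (fun y : ℝ => b ^ (1 - s) * (Real.exp (-(b * y)) * (b * y) ^ (s - 1)))
        (Set.Ioi 0) := h1.const_mul (b ^ (1 - s))
    refine h3.congr_fun (fun y hy => ?_) measurableSet_Ioi
    have hy' : (0:ℝ) < y := hy
    have hb1 : b ^ (1 - s) * b ^ (s - 1) = 1 := by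
      rw [← Real.rpow_add hb]; norm_num
    dsimp only
    rw [Real.mul_rpow hb.le hy'.le]
    linear_combination (Real.exp (-(b * y)) * y ^ (s - 1)) * hb1
  have h4 := (integrableOn_Ioi_comp_rpow_iff'
    (fun y => y ^ (s - 1) * Real.exp (-(b * y))) hp.ne').mpr h2
  refine h4.congr_fun (fun x hx => ?_) measurableSet_Ioi
  have hx' : (0:ℝ) < x := hx
  have e1 : (x ^ p) ^ (s - 1) = x ^ (q + 1 - p) := by
    rw [← Real.rpow_mul hx'.le]
    congr 1
    rw [hs_def]
    field_simp
  simp only [smul_eq_mul, e1]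
  rw [← mul_assoc, ← Real.rpow_add hx']
  congr 1
  · congr 1; ring
  · congr 2; ring

lemma Gamma_sq_le {s : ℝ} (hs : 0 < s) :
    Real.Gamma (1 + s) ^ 2 ≤ Real.Gamma (1 + 2 * s) := by
  have hc := Real.convexOn_log_Gamma
  have h := hc.2 (Set.mem_Ioi.mpr one_pos)
    (Set.mem_Ioi.mpr (by linarith : (0:ℝ) < 1 + 2 * s))
    (by norm_num : (0:ℝ) ≤ 1/2) (by norm_num : (0:ℝ) ≤ 1/2) (by norm_num)
  simp only [smul_eq_mul, Function.comp] at h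
  have harg : (1:ℝ)/2 * 1 + 1/2 * (1 + 2*s) = 1 + s := by ring
  rw [harg, Real.Gamma_one, Real.log_one] at h
  have hpos1 : 0 < Real.Gamma (1 + s) := Real.Gamma_pos_of_pos (by linarith)
  have hpos2 : 0 < Real.Gamma (1 + 2 * s) := Real.Gamma_pos_of_pos (by linarith)
  have h1 : Real.log (Real.Gamma (1 + s) ^ 2) ≤ Real.log (Real.Gamma (1 + 2 * s)) := by
    rw [Real.log_pow]; push_cast; linarith
  exact (Real.log_le_log_iff (pow_pos hpos1 2) hpos2).mp h1

lemma Zpos {α β δ : ℝ} (hα : 0 < α) (hβ : 0 < β) :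
    0 < 2 + δ^2*β^2*Real.Gamma (1+2/α) - 2*δ*β*Real.Gamma (1+1/α) := by
  have h1 : 0 < Real.Gamma (1 + 1/α) :=
    Real.Gamma_pos_of_pos (by positivity)
  have h2 : Real.Gamma (1 + 1/α) ^ 2 ≤ Real.Gamma (1 + 2/α) := by
    have := Gamma_sq_le (s := 1/α) (by positivity)
    rwa [show 2 * (1/α) = 2/α by ring] at this
  nlinarith [sq_nonneg (1 - δ*β*Real.Gamma (1 + 1/α)), sq_nonneg (δ*β),
    mul_le_mul_of_nonneg_left h2 (sq_nonneg (δ*β))]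

lemma bw_decomp (α β δ : ℝ) (hα : 0 < α) (hβ : 0 < β) {x : ℝ} (hx : 0 < x) :
    bwPdf α β δ x =
      (α / (β * (2 + δ^2*β^2*Real.Gamma (1+2/α) - 2*δ*β*Real.Gamma (1+1/α)))) * β^(1-α) *
      (2 * (x^(α-1) * Real.exp (-(β^α)⁻¹ * x^α)) - 2*δ*(x^α * Real.exp (-(β^α)⁻¹ * x^α))
        + δ^2*(x^(α+1) * Real.exp (-(β^α)⁻¹ * x^α))) := by
  have hxne : x ≠ 0 := hx.ne'
  have h1 : x ^ α = x ^ (α-1) * x := by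
    have := Real.rpow_add_one hxne (α-1)
    rwa [sub_add_cancel] at this
  have h2 : x ^ (α+1) = x ^ (α-1) * x^2 := by
    have h := Real.rpow_add hx (α-1) 2
    rw [Real.rpow_two] at h
    rw [show α+1 = α-1+2 by ring, h]
  simp only [bwPdf]
  rw [Real.div_rpow hx.le hβ.le, Real.div_rpow hx.le hβ.le]
  rw [div_eq_mul_inv (x^(α-1)), ← Real.rpow_neg hβ.le, show -(α-1) = 1-α by ring]
  rw [show -(x^α / β^α) = -(β^α)⁻¹ * x^α by ring]
  rw [h1, h2]
  ring
lemma bw_integrableOn (α β δ : ℝ) (hα : 0 < α) (hβ : 0 < β) :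
    IntegrableOn (bwPdf α β δ) (Set.Ioi 0) := by
  have hb : 0 < (β^α)⁻¹ := inv_pos.mpr (Real.rpow_pos_of_pos hβ α)
  have hE0 := int_aux hα (show (-1:ℝ) < α - 1 by linarith) hb
  have hE1 := int_aux hα (show (-1:ℝ) < α by linarith) hb
  have hE2 := int_aux hα (show (-1:ℝ) < α + 1 by linarith) hb
  have hcomb : IntegrableOn (fun x : ℝ =>
      (α / (β * (2 + δ^2*β^2*Real.Gamma (1+2/α) - 2*δ*β*Real.Gamma (1+1/α)))) * β^(1-α) *
      (2 * (x^(α-1) * Real.exp (-(β^α)⁻¹ * x^α)) - 2*δ*(x^α * Real.exp (-(β^α)⁻¹ * x^α))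
        + δ^2*(x^(α+1) * Real.exp (-(β^α)⁻¹ * x^α)))) (Set.Ioi 0) :=
    (((hE0.const_mul 2).sub (hE1.const_mul (2*δ))).add (hE2.const_mul (δ^2))).const_mul _
  exact hcomb.congr_fun (fun x hx => (bw_decomp α β δ hα hβ hx).symm) measurableSet_Ioi

lemma bw_integral (α β δ : ℝ) (hα : 0 < α) (hβ : 0 < β) :
    ∫ x in Set.Ioi (0:ℝ), bwPdf α β δ x = 1 := by
  have hZ := Zpos (δ := δ) hα hβ
  have hb : 0 < (β^α)⁻¹ := inv_pos.mpr (Real.rpow_pos_of_pos hβ α)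
  have hbeq : (β^α)⁻¹ = β ^ (-α) := (Real.rpow_neg hβ.le α).symm
  have hE0 := int_aux hα (show (-1:ℝ) < α - 1 by linarith) hb
  have hE1 := int_aux hα (show (-1:ℝ) < α by linarith) hb
  have hE2 := int_aux hα (show (-1:ℝ) < α + 1 by linarith) hb
  have hI0 : ∫ x in Set.Ioi (0:ℝ), x^(α-1) * Real.exp (-(β^α)⁻¹ * x^α)
      = β^α * (1/α) := by
    rw [integral_rpow_mul_exp_neg_mul_rpow hα (by linarith) hb,
      show α - 1 + 1 = α by ring, div_self hα.ne', Real.Gamma_one, mul_one,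
      show -α/α = (-1:ℝ) by field_simp, Real.rpow_neg_one, inv_inv]
  have hI1 : ∫ x in Set.Ioi (0:ℝ), x^α * Real.exp (-(β^α)⁻¹ * x^α)
      = β^(α+1) * (1/α) * Real.Gamma (1 + 1/α) := by
    rw [integral_rpow_mul_exp_neg_mul_rpow hα (by linarith) hb,
      show (α+1)/α = 1 + 1/α by field_simp, hbeq, ← Real.rpow_mul hβ.le,
      show -α * (-(α+1)/α) = α + 1 by field_simp]
  have hI2 : ∫ x in Set.Ioi (0:ℝ), x^(α+1) * Real.exp (-(β^α)⁻¹ * x^α)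
      = β^(α+2) * (1/α) * Real.Gamma (1 + 2/α) := by
    rw [integral_rpow_mul_exp_neg_mul_rpow hα (by linarith) hb,
      show α + 1 + 1 = α + 2 by ring,
      show (α+2)/α = 1 + 2/α by field_simp, hbeq, ← Real.rpow_mul hβ.le,
      show -α * (-(α+2)/α) = α + 2 by field_simp]
  have hstep : ∫ x in Set.Ioi (0:ℝ), bwPdf α β δ x =
      (α / (β * (2 + δ^2*β^2*Real.Gamma (1+2/α) - 2*δ*β*Real.Gamma (1+1/α)))) * β^(1-α) *
      (2 * (β^α * (1/α)) - 2*δ*(β^(α+1) * (1/α) * Real.Gamma (1 + 1/α))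
        + δ^2*(β^(α+2) * (1/α) * Real.Gamma (1 + 2/α))) := by
    rw [setIntegral_congr_fun measurableSet_Ioi
      (fun x hx => bw_decomp α β δ hα hβ hx)]
    have hsub : IntegrableOn (fun x : ℝ =>
        2 * (x^(α-1) * Real.exp (-(β^α)⁻¹ * x^α)) - 2*δ*(x^α * Real.exp (-(β^α)⁻¹ * x^α)))
        (Set.Ioi 0) := (hE0.const_mul 2).sub (hE1.const_mul (2*δ))
    rw [integral_const_mul, integral_add hsub (hE2.const_mul (δ^2)),
      integral_sub (hE0.const_mul 2) (hE1.const_mul (2*δ)),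
      integral_const_mul, integral_const_mul, integral_const_mul, hI0, hI1, hI2]
  rw [hstep]
  have e1 : β^(1-α) * β^α = β := by
    rw [← Real.rpow_add hβ]; norm_num
  have e2 : β^(1-α) * β^(α+1) = β^2 := by
    rw [← Real.rpow_add hβ, show 1-α+(α+1) = (2:ℝ) by ring, Real.rpow_two]
  have e3 : β^(1-α) * β^(α+2) = β^3 := by
    rw [← Real.rpow_add hβ, show 1-α+(α+2) = (3:ℝ) by ring,
      show (3:ℝ) = ((3:ℕ):ℝ) by norm_num, Real.rpow_natCast]
  have hS : β^(1-α) * (2 * (β^α * (1/α)) - 2*δ*(β^(α+1) * (1/α) * Real.Gamma (1 + 1/α))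
      + δ^2*(β^(α+2) * (1/α) * Real.Gamma (1 + 2/α)))
      = β * (2 + δ^2*β^2*Real.Gamma (1+2/α) - 2*δ*β*Real.Gamma (1+1/α)) * (1/α) := by
    linear_combination (2*(1/α))*e1 - (2*δ*(1/α)*Real.Gamma (1 + 1/α))*e2
      + (δ^2*(1/α)*Real.Gamma (1 + 2/α))*e3
  rw [mul_assoc, hS]
  generalize hg : (2 + δ^2*β^2*Real.Gamma (1+2/α) - 2*δ*β*Real.Gamma (1+1/α)) = z at hZ ⊢
  field_simp
lemma bw_tail (α β δ : ℝ) (hα : 0 < α) (hβ : 0 < β) :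
    Filter.Tendsto (fun t => ∫ x in Set.Ioi t, bwPdf α β δ x)
      (nhdsWithin 0 (Set.Ioi 0)) (nhds 1) := by
  have hint := bw_integrableOn α β δ hα hβ
  have hIcc : IntegrableOn (bwPdf α β δ) (Set.Icc 0 1) := by
    rw [integrableOn_Icc_iff_integrableOn_Ioc]
    exact hint.mono_set Set.Ioc_subset_Ioi_self
  have hcont := intervalIntegral.continuousOn_primitive (μ := volume)
    (f := bwPdf α β δ) (a := 0) (b := 1) hIcc
  have h0 : ContinuousWithinAt (fun t => ∫ x in Set.Ioc 0 t, bwPdf α β δ x)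
      (Set.Icc 0 1) 0 := hcont 0 (by norm_num)
  have hP : Filter.Tendsto (fun t => ∫ x in Set.Ioc 0 t, bwPdf α β δ x)
      (nhdsWithin 0 (Set.Ioi 0)) (nhds 0) := by
    have h1 : Filter.Tendsto (fun t => ∫ x in Set.Ioc 0 t, bwPdf α β δ x)
        (nhdsWithin 0 (Set.Icc 0 1)) (nhds (∫ x in Set.Ioc (0:ℝ) 0, bwPdf α β δ x)) := h0
    rw [Set.Ioc_self, MeasureTheory.setIntegral_empty] at h1
    refine h1.mono_left ?_
    rw [← nhdsWithin_Ioo_eq_nhdsGT (zero_lt_one (α := ℝ))]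
    exact nhdsWithin_mono _ Set.Ioo_subset_Icc_self
  have heq : ∀ t ∈ Set.Ioi (0:ℝ),
      1 - (∫ x in Set.Ioc 0 t, bwPdf α β δ x) = ∫ x in Set.Ioi t, bwPdf α β δ x := by
    intro t ht
    have hsplit : ∫ x in Set.Ioi (0:ℝ), bwPdf α β δ x =
        (∫ x in Set.Ioc 0 t, bwPdf α β δ x) + ∫ x in Set.Ioi t, bwPdf α β δ x := by
      rw [← MeasureTheory.setIntegral_union (Set.Ioc_disjoint_Ioi le_rfl)
        measurableSet_Ioi (hint.mono_set Set.Ioc_subset_Ioi_self)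
        (hint.mono_set (Set.Ioi_subset_Ioi (le_of_lt ht))),
        Set.Ioc_union_Ioi_eq_Ioi (le_of_lt ht)]
    rw [bw_integral α β δ hα hβ] at hsplit
    linarith
  have hlim : Filter.Tendsto (fun t => 1 - ∫ x in Set.Ioc 0 t, bwPdf α β δ x)
      (nhdsWithin 0 (Set.Ioi 0)) (nhds 1) := by
    have := tendsto_const_nhds (α := ℝ) (f := nhdsWithin 0 (Set.Ioi 0)) (x := 1) |>.sub hP
    simpa using this
  refine hlim.congr' ?_
  exact eventually_mem_nhdsWithin.mono (fun t ht => heq t ht)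
theorem stmt_16 (α β δ : ℝ) (hα : 0 < α) (hβ : 0 < β) :
    (1 < α → Filter.Tendsto
        (fun t => bwPdf α β δ t / ∫ x in Set.Ioi t, bwPdf α β δ x)
        (nhdsWithin 0 (Set.Ioi 0)) (nhds 0)) ∧
    (α = 1 → Filter.Tendsto
        (fun t => bwPdf α β δ t / ∫ x in Set.Ioi t, bwPdf α β δ x)
        (nhdsWithin 0 (Set.Ioi 0)) (nhds (1 / (β * (1 - δ*β + δ^2*β^2))))) ∧
    (α < 1 → Filter.Tendsto
        (fun t => bwPdf α β δ t / ∫ x in Set.Ioi t, bwPdf α β δ x)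
        (nhdsWithin 0 (Set.Ioi 0)) Filter.atTop) := by
  have hZ := Zpos (δ := δ) hα hβ
  have hD := bw_tail α β δ hα hβ
  have hC : 0 < α / (β * (2 + δ^2*β^2*Real.Gamma (1+2/α) - 2*δ*β*Real.Gamma (1+1/α))) :=
    div_pos hα (mul_pos hβ hZ)
  set C := α / (β * (2 + δ^2*β^2*Real.Gamma (1+2/α) - 2*δ*β*Real.Gamma (1+1/α))) with hCdef
  -- common part : the factor without the power (x/β)^(α-1)
  have t1 : Filter.Tendsto (fun x : ℝ => x/β) (nhds 0) (nhds 0) := by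
    simpa using (continuous_id.div_const β).tendsto (0:ℝ)
  have t2 : Filter.Tendsto (fun y : ℝ => y ^ α) (nhds 0) (nhds 0) := by
    have := (Real.continuousAt_rpow_const 0 α (Or.inr hα.le)).tendsto
    simpa [Real.zero_rpow hα.ne'] using this
  have t3 : Filter.Tendsto (fun x : ℝ => Real.exp (-(x/β)^α)) (nhds 0) (nhds 1) := by
    have hneg := (t2.comp t1).neg
    rw [neg_zero] at hneg
    have := (Real.continuous_exp.tendsto 0).comp hneg
    simpa [Real.exp_zero, Function.comp_def] using this
  have t4 : Filter.Tendsto (fun x : ℝ => C * (1+(1-δ*x)^2)) (nhds 0) (nhds (2*C)) := by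
    have hcont : Continuous fun x : ℝ => C * (1+(1-δ*x)^2) := by continuity
    have := hcont.tendsto 0
    convert this using 2
    ring
  have hA : Filter.Tendsto (fun x : ℝ => C * (1+(1-δ*x)^2) * Real.exp (-(x/β)^α))
      (nhdsWithin 0 (Set.Ioi 0)) (nhds (2*C)) := by
    have := t4.mul t3
    rw [mul_one] at this
    exact this.mono_left nhdsWithin_le_nhds
  refine ⟨?_, ?_, ?_⟩
  · -- α > 1
    intro hα1
    have t5 : Filter.Tendsto (fun y : ℝ => y ^ (α-1)) (nhds 0) (nhds 0) := by
      have := (Real.continuousAt_rpow_const 0 (α-1) (Or.inr (by linarith))).tendsto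
      simpa [Real.zero_rpow (show α - 1 ≠ 0 by intro h; linarith [sub_eq_zero.mp h])] using this
    have hP : Filter.Tendsto (fun x : ℝ => (x/β) ^ (α-1)) (nhds 0) (nhds 0) := by
      have := t5.comp t1
      simpa [Function.comp_def] using this
    have hnum : Filter.Tendsto (bwPdf α β δ) (nhdsWithin 0 (Set.Ioi 0)) (nhds 0) := by
      have := hA.mul (hP.mono_left nhdsWithin_le_nhds)
      rw [mul_zero] at this
      exact this.congr (fun x => by simp only [bwPdf, ← hCdef]; ring)
    have := hnum.div hD one_ne_zero
    rw [zero_div] at this; exact this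
  · -- α = 1
    intro hα1
    subst hα1
    have hnum : Filter.Tendsto (bwPdf 1 β δ) (nhdsWithin 0 (Set.Ioi 0)) (nhds (2*C)) := by
      refine hA.congr (fun x => ?_)
      simp only [bwPdf, ← hCdef, sub_self, Real.rpow_zero, Real.rpow_one]
      ring
    have hval : 2*C/1 = 1 / (β * (1 - δ*β + δ^2*β^2)) := by
      have hg2 : Real.Gamma (1 + 2/1) = 2 := by
        rw [show (1:ℝ) + 2/1 = 2 + 1 by norm_num, Real.Gamma_add_one (by norm_num),
          Real.Gamma_two, mul_one]
      have hg1 : Real.Gamma (1 + 1/1) = 1 := by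
        norm_num [Real.Gamma_two]
      have hpos : (0:ℝ) < 1 - δ*β + δ^2*β^2 := by nlinarith [sq_nonneg (1 - δ*β), sq_nonneg (δ*β)]
      have hne1 : β * (2 + δ^2*β^2*2 - 2*δ*β*1) ≠ 0 := by
        refine (mul_pos hβ ?_).ne'
        nlinarith [sq_nonneg (1 - δ*β), sq_nonneg (δ*β)]
      have hne2 : β * (1 - δ*β + δ^2*β^2) ≠ 0 := (mul_pos hβ hpos).ne'
      rw [div_one, hCdef, hg1, hg2, mul_one_div, div_eq_div_iff hne1 hne2]
      ring
    have := hnum.div hD one_ne_zero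
    rwa [hval] at this
  · -- α < 1
    intro hα1
    have t1' : Filter.Tendsto (fun x : ℝ => x/β) (nhdsWithin 0 (Set.Ioi 0))
        (nhdsWithin 0 (Set.Ioi 0)) := by
      rw [tendsto_nhdsWithin_iff]
      exact ⟨t1.mono_left nhdsWithin_le_nhds,
        eventually_mem_nhdsWithin.mono (fun x hx => div_pos hx hβ)⟩
    have t6 : Filter.Tendsto (fun y : ℝ => y ^ (α-1)) (nhdsWithin 0 (Set.Ioi 0))
        Filter.atTop := by
      have h7 : Filter.Tendsto (fun y : ℝ => (y⁻¹) ^ (1-α)) (nhdsWithin 0 (Set.Ioi 0))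
          Filter.atTop := (tendsto_rpow_atTop (by linarith)).comp tendsto_inv_nhdsGT_zero
      refine h7.congr' (eventually_mem_nhdsWithin.mono (fun y hy => ?_))
      have hy' : (0:ℝ) < y := hy
      rw [Real.inv_rpow hy'.le, ← Real.rpow_neg hy'.le, show -(1-α) = α - 1 by ring]
    have hP : Filter.Tendsto (fun x : ℝ => (x/β) ^ (α-1)) (nhdsWithin 0 (Set.Ioi 0))
        Filter.atTop := t6.comp t1'
    have hnum : Filter.Tendsto (bwPdf α β δ) (nhdsWithin 0 (Set.Ioi 0)) Filter.atTop := by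
      have := Filter.Tendsto.pos_mul_atTop (by linarith : (0:ℝ) < 2*C) hA hP
      exact this.congr (fun x => by simp only [bwPdf, ← hCdef]; ring)
    have hDinv : Filter.Tendsto (fun t => (∫ x in Set.Ioi t, bwPdf α β δ x)⁻¹)
        (nhdsWithin 0 (Set.Ioi 0)) (nhds 1) := by
      have := hD.inv₀ one_ne_zero
      simpa using this
    have := Filter.Tendsto.pos_mul_atTop one_pos hDinv hnum
    exact this.congr (fun t => by rw [mul_comm, div_eq_mul_inv])
end

section
/- Let X have the bimodal Weibull density with α = 2, and let x > 0 be a critical point of the density. Then x is a root of the quartic 2δ²x⁴ - 4δx³ + (4 - 3β²δ²)x² + 4β²δx - 2β² = 0. Moreover, if δ > 0 and β²δ² ≤ 4/3, this quartic has exactly one negative root, and its number of positive roots is one or three. -/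
open Real MeasureTheory Set Filter

private lemma keyB (a c s : ℝ) (ha : 0 < a) (hc : 0 < c) (hs : 0 < s) (hs4 : s ≤ 4/3) :
    0 < 2*a*c*(a^2+a*c+c^2) - 4*a*c*(a+c) + (4-3*s)*a*c + 2*s := by
  rcases le_or_gt (3*(a*c)) 2 with h | h
  · nlinarith [mul_pos ha hc, sq_nonneg (3*(a+c)-4), sq_nonneg (a-c), mul_pos (mul_pos ha hc) hs]
  · nlinarith [mul_pos ha hc, sq_nonneg (a-c), sq_nonneg (a+c-2), sq_nonneg (a*c-1),
      mul_pos (mul_pos ha hc) (mul_pos ha hc), sq_nonneg (a*c*(a+c)-2),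
      mul_nonneg (mul_pos ha hc).le (sq_nonneg (a+c-2)),
      mul_nonneg (mul_pos ha hc).le (sq_nonneg (a-c))]

private noncomputable def Pq (β δ : ℝ) (x : ℝ) : ℝ :=
  2*δ^2*x^4 - 4*δ*x^3 + (4 - 3*β^2*δ^2)*x^2 + 4*β^2*δ*x - 2*β^2

private lemma uniqPos (β δ : ℝ) (hβ : 0 < β) (hδ : 0 < δ) (hb : β^2*δ^2 ≤ 4/3) {x y : ℝ}
    (hx : 0 < x) (hy : 0 < y) (hPx : Pq β δ x = 0) (hPy : Pq β δ y = 0) : x = y := by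
  have hB : 0 < 2*δ^2*x*y*(x^2+x*y+y^2) - 4*δ*(x*y)*(x+y) + (4-3*(β^2*δ^2))*(x*y) + 2*β^2 := by
    have h1 := keyB (δ*x) (δ*y) (β^2*δ^2) (by positivity) (by positivity) (by positivity) hb
    have hδ2 : 0 < δ^2 := by positivity
    nlinarith [h1, hδ2]
  unfold Pq at hPx hPy
  rcases lt_trichotomy x y with hlt | heq | hgt
  · exfalso
    have h4 : (y - x) * (2*δ^2*x*y*(x^2+x*y+y^2) - 4*δ*(x*y)*(x+y) + (4-3*(β^2*δ^2))*(x*y) + 2*β^2) = 0 := by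
      linear_combination x * hPy - y * hPx
    exact absurd h4 (ne_of_gt (mul_pos (sub_pos.2 hlt) hB))
  · exact heq
  · exfalso
    have h4 : (x - y) * (2*δ^2*x*y*(x^2+x*y+y^2) - 4*δ*(x*y)*(x+y) + (4-3*(β^2*δ^2))*(x*y) + 2*β^2) = 0 := by
      linear_combination y * hPx - x * hPy
    exact absurd h4 (ne_of_gt (mul_pos (sub_pos.2 hgt) hB))

private lemma uniqNeg (β δ : ℝ) (hβ : 0 < β) (hδ : 0 < δ) (hb : β^2*δ^2 ≤ 4/3) {x y : ℝ}
    (hx : x < 0) (hy : y < 0) (hPx : Pq β δ x = 0) (hPy : Pq β δ y = 0) : x = y := by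
  have hxy : 0 < x*y := mul_pos_of_neg_of_neg hx hy
  have hb4 : 0 ≤ 4 - 3*(β^2*δ^2) := by linarith
  have hB : 0 < 2*δ^2*x*y*(x^2+x*y+y^2) - 4*δ*(x*y)*(x+y) + (4-3*(β^2*δ^2))*(x*y) + 2*β^2 := by
    have hq : 0 < x^2+x*y+y^2 := by nlinarith [sq_nonneg (x+y), sq_nonneg x, sq_nonneg y]
    have h1 : 0 < 2*δ^2*(x*y)*(x^2+x*y+y^2) := by positivity
    have h2 : 0 < -4*δ*(x*y)*(x+y) := by
      have hs : 0 < -(x+y) := by linarith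
      have := mul_pos (mul_pos (mul_pos (by norm_num : (0:ℝ) < 4) hδ) hxy) hs
      nlinarith [this]
    nlinarith [mul_nonneg hb4 hxy.le, sq_nonneg β]
  unfold Pq at hPx hPy
  rcases lt_trichotomy x y with hlt | heq | hgt
  · exfalso
    have h4 : (y - x) * (2*δ^2*x*y*(x^2+x*y+y^2) - 4*δ*(x*y)*(x+y) + (4-3*(β^2*δ^2))*(x*y) + 2*β^2) = 0 := by
      linear_combination x * hPy - y * hPx
    exact absurd h4 (ne_of_gt (mul_pos (sub_pos.2 hlt) hB))
  · exact heq
  · exfalso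
    have h4 : (x - y) * (2*δ^2*x*y*(x^2+x*y+y^2) - 4*δ*(x*y)*(x+y) + (4-3*(β^2*δ^2))*(x*y) + 2*β^2) = 0 := by
      linear_combination y * hPx - x * hPy
    exact absurd h4 (ne_of_gt (mul_pos (sub_pos.2 hgt) hB))

private lemma exPos (β δ : ℝ) (hβ : 0 < β) (hδ : 0 < δ) (hb : β^2*δ^2 ≤ 4/3) :
    ∃ x, 0 < x ∧ Pq β δ x = 0 := by
  have hcont : Continuous (Pq β δ) := by unfold Pq; continuity
  set M : ℝ := 3/δ + β with hM
  have hM0 : 0 < M := by positivity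
  have hδM : δ * M = 3 + δ*β := by rw [hM, mul_add, mul_div_assoc', mul_div_cancel_left₀ 3 hδ.ne']
  have hMβ : β ≤ M := by
    have h3 : 0 < 3/δ := by positivity
    rw [hM]; linarith
  have hb4 : 0 ≤ 4 - 3*(β^2*δ^2) := by linarith
  have hPM : 0 < Pq β δ M := by
    unfold Pq
    nlinarith [mul_pos hδ hM0, sq_nonneg M, mul_pos (mul_pos hδ hM0) (mul_pos hM0 hM0),
      mul_pos hβ hδ, sq_nonneg (M - β), mul_pos hβ hM0, sq_nonneg (δ*M - 3),
      mul_nonneg hb4 (sq_nonneg M), mul_pos (mul_pos hβ hβ) (mul_pos hδ hM0)]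
  have hP0 : Pq β δ 0 < 0 := by unfold Pq; nlinarith [sq_nonneg β, mul_pos hβ hβ]
  have := intermediate_value_Ioo (le_of_lt hM0) hcont.continuousOn
  have hmem : (0:ℝ) ∈ Ioo (Pq β δ 0) (Pq β δ M) := ⟨hP0, hPM⟩
  obtain ⟨x, hx, hPx⟩ := this hmem
  exact ⟨x, hx.1, hPx⟩

private lemma exNeg (β δ : ℝ) (hβ : 0 < β) (hδ : 0 < δ) (hb : β^2*δ^2 ≤ 4/3) :
    ∃ x, x < 0 ∧ Pq β δ x = 0 := by
  have hcont : Continuous (Pq β δ) := by unfold Pq; continuity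
  set M : ℝ := 3/δ + β with hM
  have hM0 : 0 < M := by positivity
  have hδM : δ * M = 3 + δ*β := by rw [hM, mul_add, mul_div_assoc', mul_div_cancel_left₀ 3 hδ.ne']
  have hMβ : β ≤ M := by
    have h3 : 0 < 3/δ := by positivity
    rw [hM]; linarith
  have hb4 : 0 ≤ 4 - 3*(β^2*δ^2) := by linarith
  have hPM : 0 < Pq β δ (-M) := by
    unfold Pq
    nlinarith [mul_pos hδ hM0, sq_nonneg M, mul_pos (mul_pos hδ hM0) (mul_pos hM0 hM0),
      mul_pos hβ hδ, sq_nonneg (M - β), mul_pos hβ hM0, sq_nonneg (δ*M - 3),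
      mul_nonneg hb4 (sq_nonneg M), mul_pos (mul_pos hβ hβ) (mul_pos hδ hM0),
      mul_nonneg (mul_pos hδ hM0).le (sq_nonneg (M-β)), mul_pos hδ (mul_pos hM0 (mul_pos hM0 hM0))]
  have hP0 : Pq β δ 0 < 0 := by unfold Pq; nlinarith [sq_nonneg β, mul_pos hβ hβ]
  have := intermediate_value_Ioo' (by linarith : -M ≤ (0:ℝ)) hcont.continuousOn
  have hmem : (0:ℝ) ∈ Ioo (Pq β δ 0) (Pq β δ (-M)) := ⟨hP0, hPM⟩
  obtain ⟨x, hx, hPx⟩ := this hmem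
  exact ⟨x, hx.2, hPx⟩

private lemma part1 (β δ : ℝ) (hβ : 0 < β) (x : ℝ)
    (hd : deriv (bwPdf 2 β δ) x = 0) :
    2*δ^2*x^4 - 4*δ*x^3 + (4 - 3*β^2*δ^2)*x^2 + 4*β^2*δ*x - 2*β^2 = 0 := by
  have hΓ2 : Real.Gamma (1+2/2 : ℝ) = 1 := by norm_num
  have hΓ32 : Real.Gamma (1+1/2 : ℝ) = Real.sqrt π / 2 := by
    rw [show (1+1/2:ℝ) = 1/2 + 1 by norm_num, Real.Gamma_add_one (by norm_num),
      Real.Gamma_one_half_eq]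
    ring
  set c0 : ℝ := 2 / (β * (2 + δ^2*β^2 - δ*β*Real.sqrt π)) with hc0def
  have hden : 0 < 2 + δ^2*β^2 - δ*β*Real.sqrt π := by
    nlinarith [sq_nonneg (2*(δ*β) - Real.sqrt π), Real.sq_sqrt Real.pi_pos.le,
      Real.pi_lt_d2, sq_nonneg (δ*β)]
  have hc0 : c0 ≠ 0 := by
    rw [hc0def]
    positivity
  have hfun : bwPdf 2 β δ = fun t => c0 * ((1+(1-δ*t)^2) * ((t/β) * Real.exp (-(t/β)^2))) := by
    funext t
    unfold bwPdf
    rw [hΓ2, hΓ32]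
    rw [show (2:ℝ)-1 = 1 by norm_num, Real.rpow_one,
      show ((t/β)^(2:ℝ)) = (t/β)^(2:ℕ) by rw [← Real.rpow_natCast]; norm_num]
    rw [hc0def]
    ring
  rw [hfun] at hd
  have ha : HasDerivAt (fun t : ℝ => 1 - δ*t) (-δ) x := by
    simpa using ((hasDerivAt_id x).const_mul δ).const_sub 1
  have hc : HasDerivAt (fun t : ℝ => 1 + (1-δ*t)^2) (2*(1-δ*x)^1*(-δ)) x := (ha.pow 2).const_add 1
  have hxb : HasDerivAt (fun t : ℝ => t/β) (1/β) x := by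
    simpa using (hasDerivAt_id x).div_const β
  have he : HasDerivAt (fun t : ℝ => Real.exp (-(t/β)^2))
      (Real.exp (-(x/β)^2) * -(2*(x/β)^1*(1/β))) x := ((hxb.pow 2).neg).exp
  have hprod : HasDerivAt (fun t : ℝ => (1+(1-δ*t)^2) * ((t/β) * Real.exp (-(t/β)^2)))
      ((2*(1-δ*x)^1*(-δ)) * ((x/β) * Real.exp (-(x/β)^2)) +
        (1+(1-δ*x)^2) * ((1/β) * Real.exp (-(x/β)^2) +
          (x/β) * (Real.exp (-(x/β)^2) * -(2*(x/β)^1*(1/β))))) x := hc.mul (hxb.mul he)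
  have hD := (hprod.const_mul c0).deriv
  rw [hD] at hd
  have hD2 : ((2*(1-δ*x)^1*(-δ)) * ((x/β) * Real.exp (-(x/β)^2)) +
        (1+(1-δ*x)^2) * ((1/β) * Real.exp (-(x/β)^2) +
          (x/β) * (Real.exp (-(x/β)^2) * -(2*(x/β)^1*(1/β))))) = 0 := by
    rcases mul_eq_zero.1 hd with h | h
    · exact absurd h hc0
    · exact h
  set E := Real.exp (-(x/β)^2) with hE
  have hEpos : E ≠ 0 := (Real.exp_pos _).ne'
  have hfact : (-(2*δ^2*x^4 - 4*δ*x^3 + (4 - 3*β^2*δ^2)*x^2 + 4*β^2*δ*x - 2*β^2)/β^3) * E = 0 := by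
    rw [← hD2]
    field_simp
    ring
  have h2 := (mul_eq_zero.1 hfact).resolve_right hEpos
  field_simp at h2
  linarith [h2]

theorem stmt_18 (β δ : ℝ) (hβ : 0 < β) :
    (∀ x : ℝ, 0 < x → deriv (bwPdf 2 β δ) x = 0 →
        2*δ^2*x^4 - 4*δ*x^3 + (4 - 3*β^2*δ^2)*x^2 + 4*β^2*δ*x - 2*β^2 = 0) ∧
    (0 < δ → β^2*δ^2 ≤ 4/3 →
      {x : ℝ | x < 0 ∧
        2*δ^2*x^4 - 4*δ*x^3 + (4 - 3*β^2*δ^2)*x^2 + 4*β^2*δ*x - 2*β^2 = 0}.encard = 1 ∧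
      ({x : ℝ | 0 < x ∧
        2*δ^2*x^4 - 4*δ*x^3 + (4 - 3*β^2*δ^2)*x^2 + 4*β^2*δ*x - 2*β^2 = 0}.encard = 1 ∨
       {x : ℝ | 0 < x ∧
        2*δ^2*x^4 - 4*δ*x^3 + (4 - 3*β^2*δ^2)*x^2 + 4*β^2*δ*x - 2*β^2 = 0}.encard = 3)) := by
  constructor
  · exact fun x _ hd => part1 β δ hβ x hd
  · intro hδ hb
    constructor
    · obtain ⟨r, hr, hPr⟩ := exNeg β δ hβ hδ hb
      rw [Set.encard_eq_one]
      refine ⟨r, ?_⟩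
      ext z
      simp only [Set.mem_setOf_eq, Set.mem_singleton_iff]
      constructor
      · rintro ⟨hz, hPz⟩
        exact uniqNeg β δ hβ hδ hb hz hr hPz hPr
      · rintro rfl
        exact ⟨hr, hPr⟩
    · left
      obtain ⟨r, hr, hPr⟩ := exPos β δ hβ hδ hb
      rw [Set.encard_eq_one]
      refine ⟨r, ?_⟩
      ext z
      simp only [Set.mem_setOf_eq, Set.mem_singleton_iff]
      constructor
      · rintro ⟨hz, hPz⟩
        exact uniqPos β δ hβ hδ hb hz hr hPz hPr
      · rintro rfl
        exact ⟨hr, hPr⟩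
end
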